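/- arXiv:1511.05088 — 2 statements merged into one kernel-verified Lean document; each statement's English description precedes it below -/
import Mathlib

section
/- (Brodskii; Rhemtulla–Rolfsen; Navas) A group G admits a Conradian left-ordering if and only if G is locally indicable. Here a Conradian left-ordering is a left-invariant strict linear order < on G such that for all g, h ∈ G with 1 < g and 1 < h there exists a positive integer n with g < h·gⁿ. -/
namespace ConradAux

variable {H : Type*} [Group H]

/-- Bundled hypotheses of a Conradian left-order given as a relation. -/
structure ConradOrder (H : Type*) [Group H] (r : H → H → Prop) : Prop where
  trich : ∀ a b : H, r a b ∨ a = b ∨ r b a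
  irrefl : ∀ a : H, ¬ r a a
  trans : ∀ a b c : H, r a b → r b c → r a c
  left : ∀ f a b : H, r a b → r (f * a) (f * b)
  conrad : ∀ a b : H, r 1 a → r 1 b → ∃ n : ℕ, 0 < n ∧ r a (b * a ^ n)

namespace ConradOrder

variable {r : H → H → Prop} (h : ConradOrder H r)

/-- `a ⪯ b`. -/
def Le (r : H → H → Prop) (a b : H) : Prop := ¬ r b a

include h

set_option linter.unusedSectionVars false

theorem asymm {a b : H} (hab : r a b) : ¬ r b a := fun hba =>
  h.irrefl a (h.trans a b a hab hba)

theorem le_of_lt {a b : H} (hab : r a b) : Le r a b := h.asymm hab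

theorem le_refl (a : H) : Le r a a := h.irrefl a

theorem lt_of_not_le {a b : H} (hab : ¬ Le r a b) : r b a := not_not.mp hab

theorem total' {a b : H} (h1 : ¬ r a b) (h2 : a ≠ b) : r b a := by
  rcases h.trich a b with h' | h' | h' <;> tauto

theorem le_total {a b : H} (h1 : ¬ Le r a b) : Le r b a := by
  have := h.lt_of_not_le h1
  exact h.le_of_lt this

theorem lt_of_le_of_lt {a b c : H} (hab : Le r a b) (hbc : r b c) : r a c := by
  rcases h.trich a b with h' | h' | h' 
  · exact h.trans _ _ _ h' hbc
  · rwa [h']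
  · exact absurd h' hab

theorem lt_of_lt_of_le {a b c : H} (hab : r a b) (hbc : Le r b c) : r a c := by
  rcases h.trich b c with h' | h' | h'
  · exact h.trans _ _ _ hab h'
  · rwa [← h']
  · exact absurd h' hbc

theorem le_trans {a b c : H} (hab : Le r a b) (hbc : Le r b c) : Le r a c := by
  intro hca
  exact hbc (h.lt_of_lt_of_le hca hab)

theorem le_antisymm {a b : H} (hab : Le r a b) (hba : Le r b a) : a = b := by
  rcases h.trich a b with h' | h' | h' 
  · exact absurd h' hba
  · exact h'
  · exact absurd h' hab

theorem left_le (f : H) {a b : H} (hab : Le r a b) : Le r (f * a) (f * b) := by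
  intro hc
  have := h.left f⁻¹ _ _ hc
  simp only [inv_mul_cancel_left] at this
  exact hab this

theorem left_cancel {f a b : H} (hab : r (f * a) (f * b)) : r a b := by
  have := h.left f⁻¹ _ _ hab
  simpa using this

/-- `1 ≺ a ↔ a⁻¹ ≺ 1`. -/
theorem inv_lt_one {a : H} (ha : r 1 a) : r a⁻¹ 1 := by
  have := h.left a⁻¹ _ _ ha
  simpa using this

theorem one_lt_inv {a : H} (ha : r a 1) : r 1 a⁻¹ := by
  have := h.left a⁻¹ _ _ ha
  simpa using this

theorem mul_pos {a b : H} (ha : r 1 a) (hb : r 1 b) : r 1 (a * b) := by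
  have h1 : r a (a * b) := by simpa using h.left a _ _ hb
  exact h.trans _ _ _ ha h1

theorem mul_neg {a b : H} (ha : r a 1) (hb : r b 1) : r (a * b) 1 := by
  have h1 : r (a * b) a := by simpa using h.left a _ _ hb
  exact h.trans _ _ _ h1 ha

theorem mul_nonpos {a b : H} (ha : Le r a 1) (hb : Le r b 1) : Le r (a * b) 1 := by
  have h1 : Le r (a * b) a := by simpa using h.left_le a hb
  exact h.le_trans h1 ha

theorem pow_pos {a : H} (ha : r 1 a) : ∀ n : ℕ, 0 < n → r 1 (a ^ n) := by
  intro n hn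
  induction n with
  | zero => omega
  | succ m ih =>
    rcases Nat.eq_zero_or_pos m with hm | hm
    · subst hm; simpa using ha
    · rw [pow_succ]
      exact h.mul_pos (ih hm) ha

theorem pow_lt_pow {a : H} (ha : r 1 a) {m n : ℕ} (hmn : m < n) : r (a ^ m) (a ^ n) := by
  have : r 1 (a ^ (n - m)) := h.pow_pos ha _ (by omega)
  have h2 := h.left (a ^ m) _ _ this
  rw [mul_one, ← pow_add] at h2
  have : m + (n - m) = n := by omega
  rwa [this] at h2

theorem pow_le_pow {a : H} (ha : r 1 a) {m n : ℕ} (hmn : m ≤ n) : Le r (a ^ m) (a ^ n) := by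
  rcases Nat.lt_or_ge m n with h' | h'
  · exact h.le_of_lt (h.pow_lt_pow ha h')
  · have : m = n := by omega
    rw [this]; exact h.le_refl _

/-- Key lemma (Navas): a Conradian order satisfies the `n = 2` property. -/
theorem conrad2 {g w : H} (hg : r 1 g) (hw : r 1 w) : r g (w * g ^ 2) := by
  by_contra hcon
  -- `w*g^2 ⪯ g`
  have hle : Le r (w * g ^ 2) g := by
    intro hgg
    rcases h.trich g (w * g ^ 2) with h' | h' | h' <;> tauto
  set x := w * g with hx
  have hxpos : r 1 x := h.mul_pos hw hg
  -- x^k * g ⪯ g for all k ≥ 1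
  have hstep : ∀ k : ℕ, 0 < k → Le r (x ^ k * g) g := by
    intro k hk
    induction k with
    | zero => omega
    | succ m ih =>
      rcases Nat.eq_zero_or_pos m with hm | hm
      · subst hm
        simpa [hx, pow_one, mul_assoc, pow_two] using hle
      · have h1 : Le r (x ^ (m + 1) * g) (x * g) := by
          have := h.left_le x (ih hm)
          rw [← mul_assoc, ← pow_succ'] at this
          exact this
        have h2 : Le r (x * g) g := by
          simpa [hx, mul_assoc, pow_two] using hle
        exact h.le_trans h1 h2
  have hxk : ∀ k : ℕ, 0 < k → r (x ^ k) g := by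
    intro k hk
    have h1 : r (x ^ k) (x ^ k * g) := by simpa using h.left (x ^ k) _ _ hg
    exact h.lt_of_lt_of_le h1 (hstep k hk)
  obtain ⟨n, hn, hcn⟩ := h.conrad x w hxpos hw
  -- from x ≺ w * x^n we get g ≺ x^n
  have hg' : r g (x ^ n) := by
    apply h.left_cancel (f := w)
    rw [← hx]
    exact hcn
  exact h.asymm (hxk n hn) hg'

/-- Core inequality: if `k ⪯ 1 ≺ a` then `k*a ≺ a^2`. -/
theorem ci {k a : H} (hk : Le r k 1) (ha : r 1 a) : r (k * a) (a ^ 2) := by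
  rcases h.trich k 1 with h' | h' | h'
  · have h2 := h.conrad2 ha (h.one_lt_inv h')
    have := h.left k _ _ h2
    rwa [← mul_assoc, mul_inv_cancel, one_mul] at this
  · subst h'
    have := h.left a _ _ ha
    simpa [pow_two] using this
  · exact absurd h' hk

/-- `x ≺ a^n` implies `x * a^n ≺ a^(3n)` (for `1 ≺ a`). -/
theorem rbound {x a : H} {n : ℕ} (ha : r 1 a) (hx : r x (a ^ n)) (hn : 0 < n) :
    r (x * a ^ n) (a ^ (3 * n)) := by
  have hapow : r 1 (a ^ n) := h.pow_pos ha n hn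
  have hk : Le r ((a ^ n)⁻¹ * x) 1 :=
    h.le_of_lt (by simpa using h.left (a ^ n)⁻¹ _ _ hx)
  have h1 := h.ci hk hapow
  have h2 := h.left (a ^ n) _ _ h1
  have e1 : a ^ n * ((a ^ n)⁻¹ * x * a ^ n) = x * a ^ n := by group
  have e2 : a ^ n * (a ^ n) ^ 2 = a ^ (3 * n) := by
    rw [← pow_mul, ← pow_add]; congr 1; omega
  rwa [e1, e2] at h2


/-- A convex subgroup. -/
def Conv (r : H → H → Prop) (K : Subgroup H) : Prop :=
  ∀ a b x : H, a ∈ K → b ∈ K → Le r a x → Le r x b → x ∈ K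

theorem conv_bot : Conv r (⊥ : Subgroup H) := by
  intro a b x ha hb hax hxb
  simp only [Subgroup.mem_bot] at *
  subst ha; subst hb
  exact (h.le_antisymm hxb hax)

/-- The convex subgroup of elements bounded (with inverses) by powers of `f`. -/
def Cf (h : ConradOrder H r) {f : H} (hf : r 1 f) : Subgroup H where
  carrier := {x | ∃ n : ℕ, 0 < n ∧ r x (f ^ n) ∧ r x⁻¹ (f ^ n)}
  one_mem' := ⟨1, by simpa using hf, by simpa using hf, by simpa using hf⟩
  inv_mem' := by
    rintro x ⟨n, hn, h1, h2⟩
    exact ⟨n, hn, by simpa using h2, by simpa using h1⟩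
  mul_mem' := by
    rintro x y ⟨n, hn, hx1, hx2⟩ ⟨m, hm, hy1, hy2⟩
    set N := max n m with hN
    have hNpos : 0 < N := by omega
    have bx1 : r x (f ^ N) := h.lt_of_lt_of_le hx1 (h.pow_le_pow hf (by omega))
    have bx2 : r x⁻¹ (f ^ N) := h.lt_of_lt_of_le hx2 (h.pow_le_pow hf (by omega))
    have by1 : r y (f ^ N) := h.lt_of_lt_of_le hy1 (h.pow_le_pow hf (by omega))
    have by2 : r y⁻¹ (f ^ N) := h.lt_of_lt_of_le hy2 (h.pow_le_pow hf (by omega))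
    refine ⟨3 * N, by omega, ?_, ?_⟩
    · have h1 : r (x * y) (x * f ^ N) := h.left x _ _ by1
      exact h.trans _ _ _ h1 (h.rbound hf bx1 hNpos)
    · have h1 : r ((x*y)⁻¹) (y⁻¹ * f ^ N) := by
        rw [mul_inv_rev]
        exact h.left y⁻¹ _ _ bx2
      exact h.trans _ _ _ h1 (h.rbound hf by2 hNpos)

theorem mem_cf {f : H} (hf : r 1 f) {x : H} :
    x ∈ h.Cf hf ↔ ∃ n : ℕ, 0 < n ∧ r x (f ^ n) ∧ r x⁻¹ (f ^ n) := Iff.rfl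

theorem f_mem_cf {f : H} (hf : r 1 f) : f ∈ h.Cf hf := by
  refine ⟨2, by omega, ?_, ?_⟩
  · simpa using h.pow_lt_pow hf (show 1 < 2 by omega)
  · exact h.trans _ _ _ (h.inv_lt_one hf) (h.pow_pos hf 2 (by omega))

theorem conv_cf {f : H} (hf : r 1 f) : Conv r (h.Cf hf) := by
  rintro a b x ⟨n, hn, ha1, ha2⟩ ⟨m, hm, hb1, hb2⟩ hax hxb
  set N := max n m with hN
  have hNpos : 0 < N := by omega
  have hb1' : r b (f ^ N) := h.lt_of_lt_of_le hb1 (h.pow_le_pow hf (by omega))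
  have ha2' : r a⁻¹ (f ^ N) := h.lt_of_lt_of_le ha2 (h.pow_le_pow hf (by omega))
  refine ⟨2 * N, by omega, ?_, ?_⟩
  · have : r x (f ^ N) := h.lt_of_le_of_lt hxb hb1'
    exact h.lt_of_lt_of_le this (h.pow_le_pow hf (by omega))
  · -- bound x⁻¹
    rcases h.trich a x with hax' | hax' | hax'
    · have hk : Le r (x⁻¹ * a) 1 := by
        have := h.left x⁻¹ _ _ hax'
        rw [inv_mul_cancel] at this
        exact h.le_of_lt this
      have h1 : r (x⁻¹ * a * a⁻¹) (x⁻¹ * a * (f ^ N)) := h.left _ _ _ ha2'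
      rw [mul_assoc, mul_inv_cancel, mul_one] at h1
      have h2 := h.ci hk (h.pow_pos hf N hNpos)
      rw [← pow_mul] at h2
      have h3 : r (x⁻¹ * a * f ^ N) (f ^ (N * 2)) := h2
      have := h.trans _ _ _ h1 h3
      rwa [show N * 2 = 2 * N by omega] at this
    · subst hax'
      exact h.lt_of_lt_of_le ha2 (h.pow_le_pow hf (by omega))
    · exact absurd hax' hax

/-- Convex subgroups form a chain. -/
theorem conv_chain {K1 K2 : Subgroup H} (h1 : Conv r K1) (h2 : Conv r K2)
    {c : H} (hc1 : c ∈ K1) (hc2 : c ∉ K2) : K2 ≤ K1 := by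
  -- find a positive version of c
  have hc1' : c ≠ 1 := by rintro rfl; exact hc2 (one_mem _)
  obtain ⟨cp, hcp_pos, hcp1, hcp2⟩ : ∃ cp, r 1 cp ∧ cp ∈ K1 ∧ cp ∉ K2 := by
    rcases h.trich 1 c with h' | h' | h'
    · exact ⟨c, h', hc1, hc2⟩
    · exact absurd h'.symm hc1'
    · exact ⟨c⁻¹, h.one_lt_inv h', inv_mem hc1, fun hh => hc2 (by simpa using inv_mem hh)⟩
  intro d hd
  -- positive version of d
  rcases h.trich 1 d with h' | h' | h'
  · -- d positive
    rcases h.trich cp d with h'' | h'' | h''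
    · exact absurd (h2 1 d cp (one_mem _) hd (h.le_of_lt hcp_pos) (h.le_of_lt h'')) hcp2
    · subst h''; exact hcp1
    · exact h1 1 cp d (one_mem _) hcp1 (h.le_of_lt h') (h.le_of_lt h'')
  · subst h'; exact one_mem _
  · -- d negative, work with d⁻¹
    have h'inv : r 1 d⁻¹ := h.one_lt_inv h'
    have : d⁻¹ ∈ K1 := by
      rcases h.trich cp d⁻¹ with h'' | h'' | h''
      · exact absurd (h2 1 d⁻¹ cp (one_mem _) (inv_mem hd) (h.le_of_lt hcp_pos)
          (h.le_of_lt h'')) hcp2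
      · rw [← h'']; exact hcp1
      · exact h1 1 cp d⁻¹ (one_mem _) hcp1 (h.le_of_lt h'inv) (h.le_of_lt h'')
    simpa using inv_mem this

/-- The union of all convex subgroups avoiding `f`. -/
def Csub (h : ConradOrder H r) {f : H} (hf : r 1 f) : Subgroup H where
  carrier := {x | ∃ K : Subgroup H, Conv r K ∧ f ∉ K ∧ x ∈ K}
  one_mem' := ⟨⊥, h.conv_bot, by
      simp only [Subgroup.mem_bot]
      rintro rfl
      exact h.irrefl 1 hf, one_mem _⟩
  inv_mem' := by
    rintro x ⟨K, hK, hfK, hxK⟩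
    exact ⟨K, hK, hfK, inv_mem hxK⟩
  mul_mem' := by
    rintro x y ⟨K1, hK1, hf1, hx1⟩ ⟨K2, hK2, hf2, hy2⟩
    by_cases hle : x ∈ K2
    · exact ⟨K2, hK2, hf2, mul_mem hle hy2⟩
    · have : K2 ≤ K1 := h.conv_chain hK1 hK2 hx1 hle
      exact ⟨K1, hK1, hf1, mul_mem hx1 (this hy2)⟩


theorem conv_csub {f : H} (hf : r 1 f) : Conv r (h.Csub hf) := by
  rintro a b x ⟨K1, hK1, hf1, ha1⟩ ⟨K2, hK2, hf2, hb2⟩ hax hxb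
  by_cases hle : a ∈ K2
  · exact ⟨K2, hK2, hf2, hK2 a b x hle hb2 hax hxb⟩
  · have : K2 ≤ K1 := h.conv_chain hK1 hK2 ha1 hle
    exact ⟨K1, hK1, hf1, hK1 a b x ha1 (this hb2) hax hxb⟩

theorem f_not_mem_csub {f : H} (hf : r 1 f) : f ∉ h.Csub hf := by
  rintro ⟨K, hK, hfK, hfK'⟩
  exact hfK hfK'

section Jump

variable {f : H} (hf : r 1 f)
  (hGEN : ∀ K : Subgroup H, Conv r K → f ∈ K → K = ⊤)

include hf hGEN

/-- Domination: every positive element outside `C` bounds everything. -/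
theorem dom {w : H} (hw : r 1 w) (hwC : w ∉ h.Csub hf) (x : H) :
    ∃ n : ℕ, 0 < n ∧ r x (w ^ n) ∧ r x⁻¹ (w ^ n) := by
  by_cases hfw : f ∈ h.Cf hw
  · have := hGEN (h.Cf hw) (h.conv_cf hw) hfw
    have hx : x ∈ h.Cf hw := by rw [this]; trivial
    exact hx
  · exact absurd ⟨h.Cf hw, h.conv_cf hw, hfw, h.f_mem_cf hw⟩ hwC

omit hGEN in
theorem small {w : H} (hw : r 1 w) (hwC : w ∉ h.Csub hf) {x : H}
    (hx : x ∈ h.Csub hf) : r x w ∧ r w⁻¹ x := by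
  constructor
  · by_contra hc
    rcases h.trich x w with h' | h' | h'
    · exact hc h'
    · subst h'; exact hwC hx
    · exact hwC (h.conv_csub hf 1 x w (one_mem _) hx (h.le_of_lt hw) (h.le_of_lt h'))
  · by_contra hc
    rcases h.trich w⁻¹ x with h' | h' | h'
    · exact hc h'
    · rw [← h'] at hx; exact hwC (by simpa using inv_mem hx)
    · have hni : r w⁻¹ 1 := h.inv_lt_one hw
      have : w⁻¹ ∈ h.Csub hf :=
        h.conv_csub hf x 1 w⁻¹ hx (one_mem _) (h.le_of_lt h') (h.le_of_lt hni)
      exact hwC (by simpa using inv_mem this)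

/-- A positive element outside `C` stays positive under conjugation. -/
theorem conj_pos {w : H} (hw : r 1 w) (hwC : w ∉ h.Csub hf) (s : H) :
    r 1 (s * w * s⁻¹) := by
  rcases h.trich 1 s with hs | hs | hs
  · -- s positive
    by_contra hc
    have hle : Le r (s * w * s⁻¹) 1 := by
      intro h'
      exact hc (h.total' (fun hh => h.asymm hh h') (fun hh => h.irrefl 1 (hh ▸ h')))
    -- powers: s * w^m * s⁻¹ ⪯ 1
    have hpow : ∀ m : ℕ, 0 < m → Le r (s * w ^ m * s⁻¹) 1 := by
      intro m hm
      induction m with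
      | zero => omega
      | succ k ih =>
        rcases Nat.eq_zero_or_pos k with hk | hk
        · subst hk; simpa using hle
        · have e : s * w ^ (k+1) * s⁻¹ = (s * w * s⁻¹) * (s * w ^ k * s⁻¹) := by
            group
          rw [e]
          exact h.mul_nonpos hle (ih hk)
    -- hence s * w^m ≺ s^2
    have hsw : ∀ m : ℕ, 0 < m → r (s * w ^ m) (s ^ 2) := by
      intro m hm
      have h1 := h.ci (hpow m hm) hs
      have e : s * w ^ m * s⁻¹ * s = s * w ^ m := by group
      rwa [e] at h1
    obtain ⟨m, hm, hm1, _⟩ := h.dom hf hGEN hw hwC (s ^ 2)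
    have h2 : r (s * s ^ 2) (s * w ^ m) := h.left s _ _ hm1
    have h3 := h.trans _ _ _ h2 (hsw m hm)
    -- s * s^2 ≺ s^2 gives s ≺ 1
    have h4 : r (s ^ 2 * s) (s ^ 2 * 1) := by
      rw [mul_one]
      rwa [show s * s ^ 2 = s ^ 2 * s by group] at h3
    exact h.irrefl 1 (h.trans _ _ _ hs (h.left_cancel h4))
  · subst hs; simpa using hw
  · -- s negative
    by_contra hc
    have hle : Le r (s * w * s⁻¹) 1 := by
      intro h'
      exact hc (h.total' (fun hh => h.asymm hh h') (fun hh => h.irrefl 1 (hh ▸ h')))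
    set t := s⁻¹ with ht
    have htpos : r 1 t := h.one_lt_inv hs
    -- w * t ⪯ t
    have hwt : Le r (w * t) t := by
      have := h.left_le t (a := s * w * s⁻¹) (b := 1) hle
      rw [mul_one] at this
      have e : t * (s * w * s⁻¹) = w * t := by rw [ht]; group
      rwa [e] at this
    have hpow : ∀ m : ℕ, 0 < m → Le r (w ^ m * t) t := by
      intro m hm
      induction m with
      | zero => omega
      | succ k ih =>
        rcases Nat.eq_zero_or_pos k with hk | hk
        · subst hk; simpa using hwt
        · have h1 : Le r (w * (w ^ k * t)) (w * t) := h.left_le w (ih hk)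
          rw [← mul_assoc, ← pow_succ'] at h1
          exact h.le_trans h1 hwt
    have hwm : ∀ m : ℕ, 0 < m → r (w ^ m) t := by
      intro m hm
      have h1 : r (w ^ m) (w ^ m * t) := by simpa using h.left (w ^ m) _ _ htpos
      exact h.lt_of_lt_of_le h1 (hpow m hm)
    obtain ⟨m, hm, hm1, _⟩ := h.dom hf hGEN hw hwC t
    exact h.asymm hm1 (hwm m hm)

/-- `C` is normal. -/
theorem csub_normal : (h.Csub hf).Normal := by
  constructor
  intro c hc s
  by_contra hv
  -- get a positive version of the conjugate
  have hc1 : c ≠ 1 := by rintro rfl; exact hv (by simpa using one_mem (h.Csub hf))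
  obtain ⟨d, hd, hdC, hconj⟩ :
      ∃ d, r 1 (s * d * s⁻¹) ∧ d ∈ h.Csub hf ∧ s * d * s⁻¹ ∉ h.Csub hf := by
    rcases h.trich 1 (s * c * s⁻¹) with h' | h' | h'
    · exact ⟨c, h', hc, hv⟩
    · exact absurd (by rw [← h']; exact one_mem _) hv
    · refine ⟨c⁻¹, ?_, inv_mem hc, ?_⟩
      · have := h.one_lt_inv h'
        rwa [show (s * c * s⁻¹)⁻¹ = s * c⁻¹ * s⁻¹ by group] at this
      · intro hh
        exact hv (by
          have := inv_mem hh
          rwa [show (s * c⁻¹ * s⁻¹)⁻¹ = s * c * s⁻¹ by group] at this)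
  set w := s * d * s⁻¹ with hwdef
  have hwpow : ∀ n : ℕ, w ^ n = s * d ^ n * s⁻¹ := by
    intro n
    rw [hwdef, conj_pow]
  rcases h.trich 1 s with hs | hs | hs
  · -- s positive: if s ∈ C then w ∈ C. So s ∉ C.
    by_cases hsC : s ∈ h.Csub hf
    · exact hconj (mul_mem (mul_mem hsC hdC) (inv_mem hsC))
    · -- uniform bound: w^n ≺ s
      have hbound : ∀ n : ℕ, 0 < n → r (w ^ n) s := by
        intro n hn
        have hdn : d ^ n ∈ h.Csub hf := pow_mem hdC n
        have hsmall := (h.small hf hs hsC (inv_mem hdn)).2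
        -- s⁻¹ ≺ d⁻ⁿ hence dⁿ * s⁻¹ ≺ 1
        have h1 : r (d ^ n * s⁻¹) 1 := by
          have := h.left (d ^ n) _ _ hsmall
          rwa [show d ^ n * (d ^ n)⁻¹ = 1 by group] at this
        have h2 := h.left s _ _ h1
        rw [mul_one, ← mul_assoc] at h2
        rwa [hwpow]
      obtain ⟨n, hn, hn1, _⟩ := h.dom hf hGEN hd hconj s
      exact h.asymm hn1 (hbound n hn)
  · subst hs
    apply hconj
    rw [hwdef]
    simpa using hdC
  · -- s negative: u := s⁻¹ positive
    set u := s⁻¹ with hu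
    have hupos : r 1 u := h.one_lt_inv hs
    by_cases hsC : s ∈ h.Csub hf
    · exact hconj (mul_mem (mul_mem hsC hdC) (inv_mem hsC))
    · have huC : u ∉ h.Csub hf := fun hh => hsC (by simpa [hu] using inv_mem hh)
      -- uniform bound: w^n = u⁻¹ dⁿ u ≺ u^2
      have hbound : ∀ n : ℕ, 0 < n → r (w ^ n) (u ^ 2) := by
        intro n hn
        have hdn : d ^ n ∈ h.Csub hf := pow_mem hdC n
        have hsmall := (h.small hf hupos huC hdn).1
        -- dⁿ ≺ u so u⁻¹ dⁿ ⪯ 1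
        have h1 : Le r (u⁻¹ * d ^ n) 1 := by
          apply h.le_of_lt
          have := h.left u⁻¹ _ _ hsmall
          rwa [inv_mul_cancel] at this
        have h2 := h.ci h1 hupos
        have e : u⁻¹ * d ^ n * u = w ^ n := by
          rw [hwpow n, hu]; group
        rwa [e] at h2
      obtain ⟨n, hn, hn1, _⟩ := h.dom hf hGEN hd hconj (u ^ 2)
      exact h.asymm hn1 (hbound n hn)

end Jump

end ConradOrder





section Holder

variable {Q : Type*} [Group Q] (P : Q → Prop)

variable (Pone : ¬ P 1) (Pmul : ∀ a b, P a → P b → P (a * b))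
  (Ptot : ∀ q : Q, q ≠ 1 → P q ∨ P q⁻¹)
  (Pconj : ∀ a s, P a → P (s * a * s⁻¹))
  (Parch : ∀ a b, P a → P b → ∃ n : ℕ, 0 < n ∧ P (b⁻¹ * a ^ n))

include Pone Pmul Ptot Pconj Parch

set_option linter.unusedSectionVars false
set_option maxHeartbeats 1000000

/-- Hölder-type theorem: an Archimedean "bi-ordered" group is abelian. -/
theorem holder_comm : ∀ x y : Q, x * y = y * x := by
  classical
  set L : Q → Q → Prop := fun a b => P (a⁻¹ * b) with hLdef
  have hLiff : ∀ a b : Q, L a b ↔ P (a⁻¹ * b) := fun a b => Iff.rfl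
  have Pasym : ∀ q : Q, P q → ¬ P q⁻¹ := by
    intro q hq hq'
    exact Pone (by simpa using Pmul q q⁻¹ hq hq')
  have Ppow : ∀ (q : Q) (n : ℕ), P q → 0 < n → P (q ^ n) := by
    intro q n hq hn
    induction n with
    | zero => omega
    | succ k ih =>
      rcases Nat.eq_zero_or_pos k with hk | hk
      · subst hk; simpa using hq
      · rw [pow_succ]; exact Pmul _ _ (ih hk) hq
  have t1 : ∀ {a b c : Q}, L a b → L b c → L a c := by
    intro a b c h1 h2
    have := Pmul _ _ h1 h2
    rwa [show a⁻¹ * b * (b⁻¹ * c) = a⁻¹ * c by group] at this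
  have irr : ∀ a : Q, ¬ L a a := by
    intro a ha
    rw [hLiff, inv_mul_cancel] at ha
    exact Pone ha
  have asym : ∀ {a b : Q}, L a b → ¬ L b a := fun h1 h2 => irr _ (t1 h1 h2)
  have mulL : ∀ (c : Q) {a b : Q}, L a b → L (c * a) (c * b) := by
    intro c a b hab
    rw [hLiff] at hab ⊢
    rwa [show (c*a)⁻¹ * (c*b) = a⁻¹ * b by group]
  have mulR : ∀ (c : Q) {a b : Q}, L a b → L (a * c) (b * c) := by
    intro c a b hab
    rw [hLiff] at hab ⊢
    have := Pconj _ c⁻¹ hab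
    rwa [show c⁻¹ * (a⁻¹ * b) * c⁻¹⁻¹ = (a*c)⁻¹ * (b*c) by group] at this
  have mulL' : ∀ (c : Q) {a b : Q}, L (c * a) (c * b) → L a b := by
    intro c a b hab
    have := mulL c⁻¹ hab
    rwa [inv_mul_cancel_left, inv_mul_cancel_left] at this
  have mulR' : ∀ (c : Q) {a b : Q}, L (a * c) (b * c) → L a b := by
    intro c a b hab
    have := mulR c⁻¹ hab
    rwa [mul_inv_cancel_right, mul_inv_cancel_right] at this
  have trich : ∀ a b : Q, L a b ∨ a = b ∨ L b a := by
    intro a b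
    by_cases hab : a⁻¹ * b = 1
    · right; left
      rw [← mul_one a, ← hab]; group
    · rcases Ptot _ hab with h' | h'
      · left; exact h'
      · right; right
        rw [hLiff]
        rwa [show (a⁻¹*b)⁻¹ = b⁻¹ * a by group] at h'
  have lt_of_le_of_lt : ∀ {a b c : Q}, ¬ L b a → L b c → L a c := by
    intro a b c h1 h2
    rcases trich a b with h' | h' | h'
    · exact t1 h' h2
    · rwa [h']
    · exact absurd h' h1
  have lt_of_lt_of_le : ∀ {a b c : Q}, L a b → ¬ L c b → L a c := by
    intro a b c h1 h2
    rcases trich b c with h' | h' | h'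
    · exact t1 h1 h'
    · rwa [← h']
    · exact absurd h' h2
  have le_trans : ∀ {a b c : Q}, ¬ L b a → ¬ L c b → ¬ L c a := by
    intro a b c h1 h2 hca
    exact h2 (lt_of_lt_of_le hca h1)
  have le_antisym : ∀ {a b : Q}, ¬ L b a → ¬ L a b → a = b := by
    intro a b h1 h2
    rcases trich a b with h' | h' | h' <;> tauto
  have Lone : ∀ {a : Q}, P a ↔ L 1 a := by
    intro a; rw [hLiff]; simp
  -- it suffices to prove positives commute
  suffices hpos : ∀ a b : Q, P a → P b → a * b = b * a by
    have haux : ∀ a b : Q, P a → a * b = b * a := by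
      intro a b ha
      by_cases hb : b = 1
      · subst hb; simp
      · rcases Ptot b hb with h' | h'
        · exact hpos a b ha h'
        · have hcomm : Commute a b⁻¹ := hpos a b⁻¹ ha h'
          simpa using hcomm.inv_right.eq
    intro x y
    by_cases hx : x = 1
    · subst hx; simp
    · rcases Ptot x hx with h' | h'
      · exact haux x y h'
      · have hcomm : Commute x⁻¹ y := haux x⁻¹ y h'
        simpa using hcomm.inv_left.eq
  by_cases hmin : ∃ m, P m ∧ ∀ x, P x → ¬ P (x⁻¹ * m)
  · -- cyclic case
    obtain ⟨m, hm, hminm⟩ := hmin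
    have hcyc : ∀ g : Q, P g → ∃ k : ℕ, g = m ^ k := by
      intro g hg
      obtain ⟨n, hn, hgn⟩ := Parch m g hm hg
      have hex : ∃ n : ℕ, P (g⁻¹ * m ^ n) := ⟨n, hgn⟩
      set n₀ := Nat.find hex with hn₀
      have hspec : P (g⁻¹ * m ^ n₀) := Nat.find_spec hex
      have hn₀pos : 0 < n₀ := by
        rcases Nat.eq_zero_or_pos n₀ with h0 | h0
        · exfalso
          rw [h0] at hspec
          simp only [pow_zero, mul_one] at hspec
          exact Pasym g hg (by simpa using hspec)
        · exact h0
      have hmin' : ¬ P (g⁻¹ * m ^ (n₀ - 1)) := Nat.find_min hex (by omega)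
      refine ⟨n₀ - 1, ?_⟩
      set z := (m ^ (n₀ - 1))⁻¹ * g with hz
      by_cases hz1 : z = 1
      · have : m ^ (n₀ - 1) * z = m ^ (n₀ - 1) * 1 := by rw [hz1]
        rw [hz, mul_inv_cancel_left, mul_one] at this
        exact this
      · exfalso
        rcases Ptot z hz1 with h' | h'
        · apply hminm z h'
          have e : z⁻¹ * m = g⁻¹ * m ^ n₀ := by
            rw [hz, mul_inv_rev, inv_inv, mul_assoc, ← pow_succ]
            congr 2
            omega
          rw [e]
          exact hspec
        · apply hmin'
          have e : z⁻¹ = g⁻¹ * m ^ (n₀ - 1) := by rw [hz]; group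
          rwa [e] at h'
    intro a b ha hb
    obtain ⟨k, hk⟩ := hcyc a ha
    obtain ⟨l, hl⟩ := hcyc b hb
    subst hk; subst hl
    rw [← pow_add, ← pow_add, Nat.add_comm]
  · -- dense case
    push_neg at hmin
    have nomin : ∀ d, P d → ∃ e, P e ∧ L e d := by
      intro d hd
      obtain ⟨e, he, hed⟩ := hmin d hd
      exact ⟨e, he, hed⟩
    -- HALF
    have half : ∀ d, P d → ∃ e, P e ∧ L (e * e) d := by
      intro d hd
      by_contra hno
      push_neg at hno
      have hsq : ∀ e, P e → L e d → e * e = d := by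
        intro e he hed
        have h1 : ¬ L (e * e) d := hno e he
        -- e' := e⁻¹ * d
        have he' : P (e⁻¹ * d) := hed
        have he'd : L (e⁻¹ * d) d := by
          rw [hLdef]
          have := Pconj e d⁻¹ he
          rwa [show d⁻¹ * e * d⁻¹⁻¹ = (e⁻¹ * d)⁻¹ * d by group] at this
        have h2 : ¬ L ((e⁻¹ * d) * (e⁻¹ * d)) d := hno _ he'
        -- from ¬ L (e'²) d derive ¬ L d (e*e)
        have h3 : ¬ L d (e * e) := by
          intro hP
          apply h2
          -- L d (e*e) ⟹ L (e'²) d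
          -- d ≺ e*e ⟹ e⁻¹d ≺ e  ⟹ e⁻¹d e⁻¹ d ≺ e e⁻¹ d = d
          have s1 : L (e⁻¹ * d) e := by
            have := mulL e⁻¹ hP
            rwa [show e⁻¹ * (e * e) = e by group] at this
          have s2 : L ((e⁻¹ * d) * (e⁻¹ * d)) (e * (e⁻¹ * d)) := mulR (e⁻¹ * d) s1
          rwa [show e * (e⁻¹ * d) = d by group] at s2
        exact le_antisym h3 h1
      obtain ⟨e1, he1, he1d⟩ := nomin d hd
      obtain ⟨e2, he2, he21⟩ := nomin e1 he1
      have he2d : L e2 d := t1 he21 he1d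
      have hsq1 : e1 * e1 = d := hsq e1 he1 he1d
      have hsq2 : e2 * e2 = d := hsq e2 he2 he2d
      have : L (e2 * e2) (e1 * e1) := t1 (mulL e2 he21) (mulR e1 he21)
      rw [hsq1, hsq2] at this
      exact irr d this
    -- bounds by powers
    have bnd : ∀ a ε : Q, P a → P ε → ∃ k : ℕ, L (ε ^ k) a ∧ ¬ L (ε ^ (k+1)) a := by
      intro a ε ha hε
      obtain ⟨n, hn, hna⟩ := Parch ε a hε ha
      have hex : ∃ n : ℕ, ¬ L (ε ^ n) a := by
        refine ⟨n, asym ?_⟩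
        exact hna
      set n₀ := Nat.find hex with hn₀
      have hspec : ¬ L (ε ^ n₀) a := Nat.find_spec hex
      have hn₀pos : 0 < n₀ := by
        rcases Nat.eq_zero_or_pos n₀ with h0 | h0
        · exfalso
          apply hspec
          rw [h0, pow_zero]
          exact Lone.mp ha
        · exact h0
      have hlt : L (ε ^ (n₀ - 1)) a := not_not.mp (Nat.find_min hex (by omega))
      refine ⟨n₀ - 1, hlt, ?_⟩
      rwa [show n₀ - 1 + 1 = n₀ by omega]
    -- no positive "commutator"
    have hnc : ∀ a b : Q, P a → P b → ¬ P ((b * a)⁻¹ * (a * b)) := by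
      intro a b ha hb hd
      set d := (b * a)⁻¹ * (a * b) with hddef
      obtain ⟨e, he, heed⟩ := half d hd
      obtain ⟨k, hk1, hk2⟩ := bnd a e ha he
      obtain ⟨l, hl1, hl2⟩ := bnd b e hb he
      -- lower bound: e^(l+k) ≺ b*a
      have hlow : L (e ^ (l + k)) (b * a) := by
        have s1 : L (e ^ l * e ^ k) (b * e ^ k) := mulR (e ^ k) hl1
        have s2 : L (b * e ^ k) (b * a) := mulL b hk1
        have := t1 s1 s2
        rwa [← pow_add] at this
      -- upper bound: a*b ⪯ e^(k+1) * e^(l+1)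
      have hup : ¬ L (e ^ (k + 1 + (l + 1))) (a * b) := by
        intro hcon
        -- a*b ≻ e^(k+1)*e^(l+1) would give a ≻ e^(k+1) or b ≻ e^(l+1)
        -- more precisely: from ¬ L (ε^(k+1)) a i.e. a ⪯ e^(k+1):
        -- a*b ⪯ e^(k+1) * b ⪯ e^(k+1) * e^(l+1)
        have s1 : ¬ L (e ^ (k+1) * b) (a * b) := by
          intro hc
          exact hk2 (mulR' b hc)
        have s2 : ¬ L (e ^ (k+1) * e ^ (l+1)) (e ^ (k+1) * b) := by
          intro hc
          exact hl2 (mulL' (e ^ (k+1)) hc)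
        rw [← pow_add] at s2
        exact (le_trans s1 s2) hcon
      -- combine:  a*b ⪯ e^(k+l+2) = e^(l+k) * (e*e) ≺ (b*a)*(e*e)
      have key : L (a * b) ((b * a) * (e * e)) := by
        have e1 : e ^ (k + 1 + (l + 1)) = e ^ (l + k) * (e * e) := by
          rw [← pow_two, ← pow_add]
          congr 1
          omega
        have s3 : L (e ^ (l + k) * (e * e)) ((b * a) * (e * e)) := mulR _ hlow
        rw [← e1] at s3
        exact lt_of_le_of_lt hup s3
      -- key says P ((a*b)⁻¹ * (b*a) * (e*e)); heed says P ((e*e)⁻¹ * d)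
      have k1 : P ((a * b)⁻¹ * ((b * a) * (e * e))) := key
      have k2 : P ((e * e)⁻¹ * d) := heed
      apply Pasym _ k2
      have eq1 : ((e*e)⁻¹ * d)⁻¹ = (a * b)⁻¹ * ((b * a) * (e * e)) := by
        rw [hddef]
        simp only [mul_inv_rev, inv_inv]
        group
      rwa [eq1]
    intro a b ha hb
    set z := (b * a)⁻¹ * (a * b) with hzdef
    by_cases hz : z = 1
    · have : (b * a) * z = (b * a) * 1 := by rw [hz]
      rw [hzdef, mul_inv_cancel_left, mul_one] at this
      exact this
    · exfalso
      rcases Ptot z hz with h' | h'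
      · exact hnc a b ha hb h'
      · apply hnc b a hb ha
        rwa [show z⁻¹ = (a * b)⁻¹ * (b * a) by rw [hzdef]; group] at h'

end Holder



open ConradOrder in
/-- A f.g. nontrivial group with a Conradian left-order surjects onto `ℤ`. -/
theorem exists_surj_hom {H : Type*} [Group H] [Nontrivial H] {r : H → H → Prop}
    (h : ConradOrder H r) (hfg : Group.FG H) :
    ∃ φ : H →* Multiplicative ℤ, Function.Surjective φ := by
  classical
  obtain ⟨S, hS⟩ : ∃ S : Finset H, Subgroup.closure (S : Set H) = ⊤ := hfg.out
  -- a dominant positive element f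
  have mx : ∀ x y : H, ∃ z : H, ¬ r z x ∧ ¬ r z y ∧ (z = x ∨ z = y) := by
    intro x y
    rcases h.trich x y with h' | h' | h'
    · exact ⟨y, h.asymm h', h.irrefl y, Or.inr rfl⟩
    · exact ⟨y, by rw [h']; exact h.irrefl y, h.irrefl y, Or.inr rfl⟩
    · exact ⟨x, h.irrefl x, h.asymm h', Or.inl rfl⟩
  have hmax : ∀ T : Finset H, ∃ f, r 1 f ∧ ∀ s ∈ T, ¬ r f s ∧ ¬ r f s⁻¹ := by
    intro T
    induction T using Finset.induction with
    | empty =>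
      obtain ⟨x, hx⟩ := exists_ne (1 : H)
      rcases h.trich 1 x with h' | h' | h'
      · exact ⟨x, h', by simp⟩
      · exact absurd h'.symm hx
      · exact ⟨x⁻¹, h.one_lt_inv h', by simp⟩
    | @insert a S' hnotmem ih =>
      obtain ⟨f', hf', hf'S⟩ := ih
      obtain ⟨z, hz1, hz2, _⟩ := mx a a⁻¹
      obtain ⟨w, hw1, hw2, _⟩ := mx f' z
      have hwpos : r 1 w := h.lt_of_lt_of_le hf' hw1
      refine ⟨w, hwpos, ?_⟩
      intro s hs
      rcases Finset.mem_insert.mp hs with rfl | hs'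
      · exact ⟨h.le_trans hz1 hw2, h.le_trans hz2 hw2⟩
      · obtain ⟨hs1, hs2⟩ := hf'S s hs'
        exact ⟨h.le_trans hs1 hw1, h.le_trans hs2 hw1⟩
  obtain ⟨f, hf, hfS⟩ := hmax S
  have hGEN : ∀ K : Subgroup H, Conv r K → f ∈ K → K = ⊤ := by
    intro K hK hfK
    have hsub : (S : Set H) ⊆ K := by
      intro s hs
      obtain ⟨hs1, hs2⟩ := hfS s hs
      rcases h.trich 1 s with h' | h' | h'
      · exact hK 1 f s (one_mem K) hfK (h.le_of_lt h') hs1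
      · rw [← h']; exact one_mem K
      · have : s⁻¹ ∈ K :=
          hK 1 f s⁻¹ (one_mem K) hfK (h.le_of_lt (h.one_lt_inv h')) hs2
        simpa using inv_mem this
    rw [eq_top_iff, ← hS]
    exact (Subgroup.closure_le K).mpr hsub
  set C : Subgroup H := h.Csub hf with hC
  haveI hnorm : C.Normal := h.csub_normal hf hGEN
  set Q := H ⧸ C with hQ
  set PQ : Q → Prop := fun q => ∃ a : H, r 1 a ∧ a ∉ C ∧ (QuotientGroup.mk a : Q) = q
    with hPQ
  have Pone : ¬ PQ 1 := by
    rintro ⟨a, hapos, haC, ha1⟩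
    exact haC ((QuotientGroup.eq_one_iff a).mp ha1)
  have Pmul : ∀ x y : Q, PQ x → PQ y → PQ (x * y) := by
    rintro x y ⟨a, ha, haC, rfl⟩ ⟨b, hb, hbC, rfl⟩
    refine ⟨a * b, h.mul_pos ha hb, ?_, rfl⟩
    intro hab
    have hsm := (h.small hf ha haC hab).1
    have := h.left a⁻¹ _ _ hsm
    rw [inv_mul_cancel_left, inv_mul_cancel] at this
    exact h.asymm hb this
  have Ptot : ∀ q : Q, q ≠ 1 → PQ q ∨ PQ q⁻¹ := by
    intro q hq
    obtain ⟨a, rfl⟩ := QuotientGroup.mk_surjective q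
    have haC : a ∉ C := fun hh => hq ((QuotientGroup.eq_one_iff a).mpr hh)
    rcases h.trich 1 a with h' | h' | h'
    · exact Or.inl ⟨a, h', haC, rfl⟩
    · exact absurd (h' ▸ one_mem C) haC
    · exact Or.inr ⟨a⁻¹, h.one_lt_inv h', fun hh => haC (by simpa using inv_mem hh), rfl⟩
  have Pconj : ∀ (x s : Q), PQ x → PQ (s * x * s⁻¹) := by
    rintro x s ⟨a, ha, haC, rfl⟩
    obtain ⟨t, rfl⟩ := QuotientGroup.mk_surjective s
    refine ⟨t * a * t⁻¹, h.conj_pos hf hGEN ha haC t, ?_, rfl⟩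
    intro hh
    apply haC
    have := hnorm.conj_mem _ hh t⁻¹
    rwa [show t⁻¹ * (t * a * t⁻¹) * t⁻¹⁻¹ = a by group] at this
  have Parch : ∀ x y : Q, PQ x → PQ y → ∃ n : ℕ, 0 < n ∧ PQ (y⁻¹ * x ^ n) := by
    rintro x y ⟨a, ha, haC, rfl⟩ ⟨b, hb, hbC, rfl⟩
    obtain ⟨n, hn, hn1, _⟩ := h.dom hf hGEN ha haC b
    have hzpos : r 1 (b⁻¹ * a ^ n) := by
      have := h.left b⁻¹ _ _ hn1
      rwa [inv_mul_cancel] at this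
    by_cases hzC : b⁻¹ * a ^ n ∈ C
    · refine ⟨n + 1, by omega, b⁻¹ * a ^ (n + 1), ?_, ?_, ?_⟩
      · -- (b⁻¹ aⁿ) * a is positive
        have hsm := (h.small hf ha haC (inv_mem hzC)).1
        have := h.left (b⁻¹ * a ^ n) _ _ hsm
        rw [mul_inv_cancel] at this
        rwa [show b⁻¹ * a ^ n * a = b⁻¹ * a ^ (n+1) by rw [mul_assoc, ← pow_succ]] at this
      · intro hh
        apply haC
        have : (b⁻¹ * a ^ n)⁻¹ * (b⁻¹ * a ^ (n+1)) ∈ C := mul_mem (inv_mem hzC) hh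
        rwa [show (b⁻¹ * a ^ n)⁻¹ * (b⁻¹ * a ^ (n+1)) = a by group] at this
      · rw [QuotientGroup.mk_mul, QuotientGroup.mk_inv, QuotientGroup.mk_pow]
    · refine ⟨n, hn, b⁻¹ * a ^ n, hzpos, hzC, ?_⟩
      rw [QuotientGroup.mk_mul, QuotientGroup.mk_inv, QuotientGroup.mk_pow]
  have commQ : ∀ x y : Q, x * y = y * x := holder_comm PQ Pone Pmul Ptot Pconj Parch
  -- Q is a f.g. nontrivial torsion-free abelian group
  haveI : Group.FG H := hfg
  haveI hQfg : Group.FG Q := Group.fg_of_surjective (QuotientGroup.mk'_surjective C)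
  have hQnt : (QuotientGroup.mk f : Q) ≠ 1 := by
    intro hh
    exact h.f_not_mem_csub hf ((QuotientGroup.eq_one_iff f).mp hh)
  haveI : Nontrivial Q := nontrivial_of_ne _ _ hQnt
  have PQpow : ∀ (q : Q) (n : ℕ), PQ q → 0 < n → PQ (q ^ n) := by
    intro q n hq hn
    induction n with
    | zero => omega
    | succ k ih =>
      rcases Nat.eq_zero_or_pos k with hk | hk
      · subst hk; simpa using hq
      · rw [pow_succ]; exact Pmul _ _ (ih hk) hq
  have tf : ∀ (q : Q) (c : ℤ), q ^ c = 1 → c = 0 ∨ q = 1 := by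
    intro q c hqc
    by_cases hq : q = 1
    · exact Or.inr hq
    · left
      by_contra hc
      have key : ∀ (p : Q) (m : ℕ), PQ p → 0 < m → p ^ m ≠ 1 := by
        intro p m hp hm h1
        have := PQpow p m hp hm
        rw [h1] at this
        exact Pone this
      rcases Ptot q hq with h' | h'
      · rcases Int.lt_or_lt_of_ne hc with hneg | hpos'
        · have : q ^ (-c).toNat = 1 := by
            rw [← zpow_natCast, Int.toNat_of_nonneg (by omega), zpow_neg, hqc, inv_one]
          exact key q _ h' (by omega) this
        · have : q ^ c.toNat = 1 := by
            rw [← zpow_natCast, Int.toNat_of_nonneg (by omega), hqc]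
          exact key q _ h' (by omega) this
      · rcases Int.lt_or_lt_of_ne hc with hneg | hpos'
        · have : q⁻¹ ^ (-c).toNat = 1 := by
            rw [← zpow_natCast, Int.toNat_of_nonneg (by omega), inv_zpow, zpow_neg, hqc]
            simp
          exact key q⁻¹ _ h' (by omega) this
        · have : q⁻¹ ^ c.toNat = 1 := by
            rw [← zpow_natCast, Int.toNat_of_nonneg (by omega), inv_zpow, hqc, inv_one]
          exact key q⁻¹ _ h' (by omega) this
  letI : CommGroup Q := { (inferInstance : Group Q) with mul_comm := commQ }
  haveI : AddGroup.FG (Additive Q) := AddGroup.fg_of_group_fg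
  haveI : Module.Finite ℤ (Additive Q) := Module.Finite.iff_addGroup_fg.mpr ‹_›
  haveI : NoZeroSMulDivisors ℤ (Additive Q) := by
    constructor
    intro c x hcx
    rcases tf x.toMul c (by rw [← toMul_zsmul, hcx]; rfl) with h' | h'
    · exact Or.inl h'
    · exact Or.inr h'
  haveI : Module.Free ℤ (Additive Q) := Module.free_of_finite_type_torsion_free'
  have b := Module.Free.chooseBasis ℤ (Additive Q)
  obtain ⟨i⟩ := b.index_nonempty
  refine ⟨{ toFun := fun x => Multiplicative.ofAdd (b.coord i (Additive.ofMul
      (QuotientGroup.mk x)))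
            map_one' := by simp
            map_mul' := by
              intro x y
              rw [← ofAdd_add]
              congr 1
              rw [← map_add]
              congr 1 }, ?_⟩
  intro z
  obtain ⟨x, hx⟩ := QuotientGroup.mk_surjective (Additive.toMul (α := Q) (z.toAdd • (b i)))
  refine ⟨x, ?_⟩
  simp only [MonoidHom.coe_mk, OneHom.coe_mk]
  rw [hx]
  have e1 : Additive.ofMul (Additive.toMul (α := Q) (z.toAdd • (b i))) = z.toAdd • (b i) := rfl
  rw [e1, map_smul, Module.Basis.coord_apply, Module.Basis.repr_self, smul_eq_mul, Finsupp.single_eq_same,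
    mul_one]
  exact ofAdd_toAdd z




variable {H : Type*} [Group H]

/-- Closure of a set under multiplication and the Conrad operation. -/
inductive CCl (S : Set H) : H → Prop
  | base {x : H} : x ∈ S → CCl S x
  | mul {a b : H} : CCl S a → CCl S b → CCl S (a * b)
  | conrad {a b : H} : CCl S a → CCl S b → CCl S (a⁻¹ * b * a ^ 2)

theorem ccl_empty {x : H} (hc : CCl (∅ : Set H) x) : False := by
  induction hc with
  | base hx => exact hx
  | mul _ _ ih1 _ => exact ih1
  | conrad _ _ ih1 _ => exact ih1

theorem ccl_mem_subgroup {Z : Subgroup H} {S : Set H} (hS : S ⊆ Z) {x : H}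
    (hc : CCl S x) : x ∈ Z := by
  induction hc with
  | base hx => exact hS hx
  | mul _ _ ih1 ih2 => exact mul_mem ih1 ih2
  | conrad _ _ ih1 ih2 => exact mul_mem (mul_mem (inv_mem ih1) ih2) (pow_mem ih1 2)

theorem sel_exist
    (hLI : ∀ K : Subgroup H, K.FG → K ≠ ⊥ → ∃ φ : K →* Multiplicative ℤ,
      Function.Surjective φ) :
    ∀ F : Finset H, (1 : H) ∉ F → (∀ g ∈ F, g⁻¹ ∈ F) →
      ∃ S : Set H, S ⊆ (F : Set H) ∧ (∀ g ∈ F, g ∈ S ∨ g⁻¹ ∈ S) ∧ ¬ CCl S 1 := by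
  classical
  intro F
  induction F using Finset.strongInduction with
  | _ F ihF =>
    intro h1F hsymF
    by_cases hFe : F = ∅
    · subst hFe
      exact ⟨∅, by simp, by simp, fun hc => ccl_empty hc⟩
    · -- F nonempty
      set K : Subgroup H := Subgroup.closure (F : Set H) with hK
      have hFK : ∀ g ∈ F, g ∈ K := fun g hg => Subgroup.subset_closure hg
      have hKFG : K.FG := ⟨F, rfl⟩
      have hKne : K ≠ ⊥ := by
        obtain ⟨g, hg⟩ := Finset.nonempty_iff_ne_empty.mpr hFe
        intro hbot
        have : g ∈ K := hFK g hg
        rw [hbot, Subgroup.mem_bot] at this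
        exact h1F (this ▸ hg)
      obtain ⟨φ, hφ⟩ := hLI K hKFG hKne
      set ψ : H → ℤ := fun g => if h : g ∈ K then (φ ⟨g, h⟩).toAdd else 0 with hψ
      have ψ_mul : ∀ {a b : H}, a ∈ K → b ∈ K → ψ (a * b) = ψ a + ψ b := by
        intro a b ha hb
        simp only [hψ, dif_pos ha, dif_pos hb, dif_pos (mul_mem ha hb)]
        rw [show (⟨a * b, mul_mem ha hb⟩ : K) = ⟨a, ha⟩ * ⟨b, hb⟩ from rfl, map_mul]
        rfl
      have ψ_one : ψ 1 = 0 := by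
        simp only [hψ, dif_pos (one_mem K)]
        rw [show (⟨(1:H), one_mem K⟩ : K) = 1 from rfl, map_one]
        rfl
      have ψ_inv : ∀ {a : H}, a ∈ K → ψ a⁻¹ = - ψ a := by
        intro a ha
        simp only [hψ, dif_pos ha, dif_pos (inv_mem ha)]
        rw [show (⟨a⁻¹, inv_mem ha⟩ : K) = (⟨a, ha⟩)⁻¹ from rfl, map_inv]
        rfl
      have ψ_sq : ∀ {a : H}, a ∈ K → ψ (a ^ 2) = 2 * ψ a := by
        intro a ha
        rw [pow_two, ψ_mul ha ha]; ring
      -- the zero subgroup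
      set Z : Subgroup H :=
        { carrier := {g | g ∈ K ∧ ψ g = 0}
          one_mem' := ⟨one_mem K, ψ_one⟩
          mul_mem' := by
            rintro a b ⟨ha, ha0⟩ ⟨hb, hb0⟩
            exact ⟨mul_mem ha hb, by rw [ψ_mul ha hb, ha0, hb0]; ring⟩
          inv_mem' := by
            rintro a ⟨ha, ha0⟩
            exact ⟨inv_mem ha, by rw [ψ_inv ha, ha0]; ring⟩ } with hZ
      -- some generator has nonzero ψ
      have hexist : ∃ g ∈ F, ψ g ≠ 0 := by
        by_contra hc
        push_neg at hc
        have hKZ : K ≤ Z := by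
          rw [hK]
          apply (Subgroup.closure_le Z).mpr
          intro g hg
          exact ⟨hFK g hg, hc g hg⟩
        obtain ⟨z, hz⟩ := hφ (Multiplicative.ofAdd 1)
        have : ψ (z : H) = 1 := by
          simp only [hψ, dif_pos z.2]
          rw [show (⟨(z : H), z.2⟩ : K) = z from rfl, hz]
          rfl
        have h0 : ψ (z : H) = 0 := (hKZ z.2).2
        omega
      obtain ⟨g₀, hg₀F, hg₀⟩ := hexist
      -- F0 and the inductive hypothesis
      set F0 : Finset H := F.filter (fun g => ψ g = 0) with hF0
      have hF0ss : F0 ⊂ F := by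
        refine Finset.ssubset_iff_of_subset (Finset.filter_subset _ _) |>.mpr ?_
        exact ⟨g₀, hg₀F, by simp [hF0, hg₀F, hg₀]⟩
      obtain ⟨S0, hS0sub, hS0sel, hS0one⟩ := ihF F0 hF0ss
        (fun hh => h1F (Finset.filter_subset _ _ hh))
        (by
          intro g hg
          rw [hF0, Finset.mem_filter] at hg ⊢
          exact ⟨hsymF g hg.1, by rw [ψ_inv (hFK g hg.1), hg.2]; ring⟩)
      have hS0Z : S0 ⊆ (Z : Set H) := by
        intro x hx
        have hxF0 : x ∈ F0 := hS0sub hx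
        rw [hF0, Finset.mem_filter] at hxF0
        exact ⟨hFK x hxF0.1, hxF0.2⟩
      -- the selection
      set S : Set H := S0 ∪ {g | g ∈ F ∧ 0 < ψ g} with hS
      refine ⟨S, ?_, ?_, ?_⟩
      · intro x hx
        rcases hx with hx | hx
        · exact Finset.filter_subset _ _ (hS0sub hx)
        · exact hx.1
      · intro g hg
        rcases lt_trichotomy (ψ g) 0 with h' | h' | h'
        · right
          right
          refine ⟨hsymF g hg, ?_⟩
          rw [ψ_inv (hFK g hg)]
          omega
        · have : g ∈ F0 := by rw [hF0, Finset.mem_filter]; exact ⟨hg, h'⟩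
          rcases hS0sel g this with hh | hh
          · exact Or.inl (Or.inl hh)
          · exact Or.inr (Or.inl hh)
        · exact Or.inl (Or.inr ⟨hg, h'⟩)
      · -- 1 is not in the closure of S
        intro hc
        have inv : ∀ x : H, CCl S x → CCl S0 x ∨ (x ∈ K ∧ 0 < ψ x) := by
          intro x hx
          induction hx with
          | base hx' =>
            rcases hx' with hx' | hx'
            · exact Or.inl (CCl.base hx')
            · exact Or.inr ⟨hFK _ hx'.1, hx'.2⟩
          | @mul a b ha hb iha ihb =>
            rcases iha with iha | iha <;> rcases ihb with ihb | ihb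
            · exact Or.inl (CCl.mul iha ihb)
            · have haZ := ccl_mem_subgroup hS0Z iha
              refine Or.inr ⟨mul_mem haZ.1 ihb.1, ?_⟩
              rw [ψ_mul haZ.1 ihb.1, haZ.2]
              omega
            · have hbZ := ccl_mem_subgroup hS0Z ihb
              refine Or.inr ⟨mul_mem iha.1 hbZ.1, ?_⟩
              rw [ψ_mul iha.1 hbZ.1, hbZ.2]
              omega
            · refine Or.inr ⟨mul_mem iha.1 ihb.1, ?_⟩
              rw [ψ_mul iha.1 ihb.1]
              omega
          | @conrad a b ha hb iha ihb =>
            have hval : ∀ (haK : a ∈ K) (hbK : b ∈ K),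
                ψ (a⁻¹ * b * a ^ 2) = ψ a + ψ b := by
              intro haK hbK
              rw [ψ_mul (mul_mem (inv_mem haK) hbK) (pow_mem haK 2),
                ψ_mul (inv_mem haK) hbK, ψ_inv haK, ψ_sq haK]
              ring
            rcases iha with iha | iha <;> rcases ihb with ihb | ihb
            · exact Or.inl (CCl.conrad iha ihb)
            · have haZ := ccl_mem_subgroup hS0Z iha
              refine Or.inr ⟨mul_mem (mul_mem (inv_mem haZ.1) ihb.1) (pow_mem haZ.1 2), ?_⟩
              rw [hval haZ.1 ihb.1, haZ.2]
              omega
            · have hbZ := ccl_mem_subgroup hS0Z ihb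
              refine Or.inr ⟨mul_mem (mul_mem (inv_mem iha.1) hbZ.1) (pow_mem iha.1 2), ?_⟩
              rw [hval iha.1 hbZ.1, hbZ.2]
              omega
            · refine Or.inr ⟨mul_mem (mul_mem (inv_mem iha.1) ihb.1) (pow_mem iha.1 2), ?_⟩
              rw [hval iha.1 ihb.1]
              omega
        rcases inv 1 hc with hh | hh
        · exact hS0one hh
        · rw [ψ_one] at hh
          omega




variable {H : Type*} [Group H]

theorem cone_exists
    (hLI : ∀ K : Subgroup H, K.FG → K ≠ ⊥ → ∃ φ : K →* Multiplicative ℤ,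
      Function.Surjective φ) :
    ∃ P : Set H, (1 : H) ∉ P ∧ (∀ a ∈ P, ∀ b ∈ P, a * b ∈ P) ∧
      (∀ g : H, g ≠ 1 → g ∈ P ∨ g⁻¹ ∈ P) ∧
      (∀ a ∈ P, ∀ b ∈ P, a⁻¹ * b * a ^ 2 ∈ P) := by
  classical
  -- symmetrized finsets
  let sym : Finset H → Finset H := fun F => (F ∪ F.image (·⁻¹)).erase 1
  have hsym1 : ∀ F, (1 : H) ∉ sym F := fun F => Finset.notMem_erase 1 _
  have hsym2 : ∀ F, ∀ g ∈ sym F, g⁻¹ ∈ sym F := by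
    intro F g hg
    rw [Finset.mem_erase] at hg ⊢
    obtain ⟨hg1, hg2⟩ := hg
    refine ⟨by simpa using hg1, ?_⟩
    rcases Finset.mem_union.mp hg2 with hh | hh
    · exact Finset.mem_union_right _ (Finset.mem_image_of_mem _ hh)
    · obtain ⟨x, hx, rfl⟩ := Finset.mem_image.mp hh
      exact Finset.mem_union_left _ (by simpa using hx)
  have hmem : ∀ (F : Finset H) (g : H), g ≠ 1 → g ∈ F → g ∈ sym F := by
    intro F g hg1 hgF
    rw [Finset.mem_erase]
    exact ⟨hg1, Finset.mem_union_left _ hgF⟩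
  -- choose selections
  have hchoice := fun F : Finset H => sel_exist hLI (sym F) (hsym1 F) (hsym2 F)
  choose Sf hSfsub hSfsel hSfone using hchoice
  -- ultrafilter
  haveI : Nonempty (Finset H) := ⟨∅⟩
  set U : Ultrafilter (Finset H) := Ultrafilter.of (Filter.atTop : Filter (Finset H)) with hU
  have hatTop : ∀ (F₀ : Finset H), {F : Finset H | F₀ ⊆ F} ∈ U := by
    intro F₀
    have hle : (U : Filter (Finset H)) ≤ (Filter.atTop : Filter (Finset H)) := by
      rw [hU]
      exact Ultrafilter.of_le (Filter.atTop : Filter (Finset H))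
    exact hle (Filter.mem_atTop F₀)
  set P : Set H := {g | {F : Finset H | CCl (Sf F) g} ∈ U} with hP
  refine ⟨P, ?_, ?_, ?_, ?_⟩
  · intro h1
    rw [hP, Set.mem_setOf_eq] at h1
    have : {F : Finset H | CCl (Sf F) 1} = ∅ := by
      ext F
      simp only [Set.mem_setOf_eq, Set.mem_empty_iff_false, iff_false]
      exact hSfone F
    rw [this] at h1
    exact Ultrafilter.empty_notMem h1
  · intro a ha b hb
    rw [hP, Set.mem_setOf_eq] at ha hb ⊢
    filter_upwards [ha, hb] with F hFa hFb
    exact CCl.mul hFa hFb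
  · intro g hg
    have hkey : {F : Finset H | ({g, g⁻¹} : Finset H) ⊆ F} ⊆
        {F : Finset H | CCl (Sf F) g} ∪ {F : Finset H | CCl (Sf F) g⁻¹} := by
      intro F hF
      simp only [Set.mem_setOf_eq, Finset.insert_subset_iff, Finset.singleton_subset_iff] at hF
      have hgsym : g ∈ sym F := hmem F g hg hF.1
      rcases hSfsel F g hgsym with hh | hh
      · exact Or.inl (CCl.base hh)
      · exact Or.inr (CCl.base hh)
    have hmemU : {F : Finset H | CCl (Sf F) g} ∪ {F : Finset H | CCl (Sf F) g⁻¹} ∈ U :=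
      Filter.mem_of_superset (hatTop {g, g⁻¹}) hkey
    rcases (Ultrafilter.union_mem_iff (f := U)).mp hmemU with hh | hh
    · exact Or.inl hh
    · exact Or.inr hh
  · intro a ha b hb
    rw [hP, Set.mem_setOf_eq] at ha hb ⊢
    filter_upwards [ha, hb] with F hFa hFb
    exact CCl.conrad hFa hFb



end ConradAux



/-- A group is locally indicable if every nontrivial finitely generated subgroup
admits a surjective homomorphism onto the integers. -/
def LocallyIndicable (G : Type*) [Group G] : Prop :=
  ∀ H : Subgroup G, H.FG → H ≠ ⊥ →
    ∃ φ : H →* Multiplicative ℤ, Function.Surjective φ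

/-- Brodskii; Rhemtulla–Rolfsen; Navas: a group admits a
Conradian left-ordering iff it is locally indicable.  A Conradian left-ordering
is a left-invariant strict linear order such that for all `g, h` with
`1 < g`, `1 < h` there is `n ≥ 1` with `g < h * gⁿ`. -/
theorem conradian_leftOrderable_iff_locallyIndicable {G : Type*} [Group G] :
    (∃ r : G → G → Prop, IsStrictTotalOrder G r ∧
        (∀ f g h : G, r g h → r (f * g) (f * h)) ∧
        (∀ g h : G, r 1 g → r 1 h → ∃ n : ℕ, 0 < n ∧ r g (h * g ^ n))) ↔
      LocallyIndicable G := by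
  constructor
  · rintro ⟨r, hsto, hleft, hconr⟩
    intro K hKfg hKne
    haveI := hsto
    -- restrict the order to K
    set r' : K → K → Prop := fun a b => r (a : G) (b : G) with hr'
    have h : ConradAux.ConradOrder K r' := by
      constructor
      · intro a b
        rcases trichotomous_of r (a : G) (b : G) with h' | h' | h'
        · exact Or.inl h'
        · exact Or.inr (Or.inl (Subtype.ext h'))
        · exact Or.inr (Or.inr h')
      · intro a
        exact irrefl_of r (a : G)
      · intro a b c hab hbc
        exact trans_of r hab hbc
      · intro f a b hab
        have := hleft (f : G) (a : G) (b : G) hab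
        simpa [hr'] using this
      · intro a b ha hb
        have ha' : r 1 (a : G) := by simpa [hr'] using ha
        have hb' : r 1 (b : G) := by simpa [hr'] using hb
        obtain ⟨n, hn, hr⟩ := hconr (a : G) (b : G) ha' hb'
        refine ⟨n, hn, ?_⟩
        show r (a : G) ((b * a ^ n : K) : G)
        push_cast
        exact hr
    haveI : Nontrivial K := (Subgroup.nontrivial_iff_ne_bot K).mpr hKne
    have hfg : Group.FG K := (Group.fg_iff_subgroup_fg K).mpr hKfg
    exact ConradAux.exists_surj_hom h hfg
  · intro hLI
    obtain ⟨P, hP1, hPmul, hPtot, hPconrad⟩ := ConradAux.cone_exists hLI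
    refine ⟨fun g h => g⁻¹ * h ∈ P, ?_, ?_, ?_⟩
    · refine { trichotomous := ?_, irrefl := ?_, trans := ?_ }
      · -- trichotomous
        intro a b
        refine fun h1 h2 => (?_ : a⁻¹ * b ∈ P ∨ a = b ∨ b⁻¹ * a ∈ P).elim
          (fun h => absurd h h1) (fun h => h.elim id (fun h => absurd h h2))
        by_cases hab : a = b
        · exact Or.inr (Or.inl hab)
        · have : a⁻¹ * b ≠ 1 := by
            intro hc
            exact hab (by rw [← mul_one a, ← hc, mul_inv_cancel_left])
          rcases hPtot _ this with h' | h'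
          · exact Or.inl h'
          · refine Or.inr (Or.inr ?_)
            rwa [mul_inv_rev, inv_inv] at h'
      · intro a ha
        rw [inv_mul_cancel] at ha
        exact hP1 ha
      · intro a b c hab hbc
        have := hPmul _ hab _ hbc
        rwa [mul_assoc, mul_inv_cancel_left] at this
    · intro f g h hgh
      have : (f * g)⁻¹ * (f * h) = g⁻¹ * h := by group
      rwa [this]
    · intro g h hg hh
      rw [inv_one, one_mul] at hg hh
      refine ⟨2, by omega, ?_⟩
      have := hPconrad g hg h hh
      rwa [mul_assoc] at this
end

section
/- (Sikora) Let n ≥ 2 and let G = ℤⁿ. For every positive cone P of an ordering of G and every finite subset S ⊆ P, there exists a positive cone P′ of an ordering of G with P′ ≠ P and S ⊆ P′. (Hence the space of orderings of ℤⁿ has no isolated points, and is homeomorphic to the Cantor set.) -/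
open Matrix Finset

/-- A positive cone of a (bi-invariant) ordering of an additive abelian group:
a subset closed under addition such that every nonzero element lies in exactly
one of `P` and `-P` (and `0 ∉ P`). -/
def IsPositiveCone {A : Type*} [AddCommGroup A] (P : Set A) : Prop :=
  (0 : A) ∉ P ∧ (∀ a ∈ P, ∀ b ∈ P, a + b ∈ P) ∧
    ∀ a : A, a ≠ 0 → Xor' (a ∈ P) (-a ∈ P)


/-- Homogeneous Farkas lemma over ℚ, by induction on the number of vectors. -/
theorem farkasQ {ι : Type*} [Fintype ι] :
    ∀ (k : ℕ) (a : Fin k → (ι → ℚ)) (b : ι → ℚ),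
      (∃ lam : Fin k → ℚ, (∀ i, 0 ≤ lam i) ∧ ∑ i, lam i • a i = b) ∨
      (∃ u : ι → ℚ, (∀ i, 0 ≤ u ⬝ᵥ a i) ∧ u ⬝ᵥ b < 0) := by
  intro k
  induction k with
  | zero =>
    intro a b
    by_cases hb : b = 0
    · exact Or.inl ⟨0, fun i => le_refl _, by simp [hb]⟩
    · refine Or.inr ⟨-b, fun i => i.elim0, ?_⟩
      have : 0 < b ⬝ᵥ b := by
        rcases (dotProduct_self_eq_zero (v := b)).not.mpr hb with h
        have hnn : 0 ≤ b ⬝ᵥ b := Finset.sum_nonneg fun i _ => mul_self_nonneg _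
        exact lt_of_le_of_ne hnn (Ne.symm h)
      simpa [neg_dotProduct] using neg_neg_iff_pos.mpr this
  | succ k IH =>
    intro a b
    set a0 : Fin k → (ι → ℚ) := fun i => a i.castSucc with ha0
    set t : ι → ℚ := a (Fin.last k) with ht
    rcases IH a0 b with ⟨lam, hnn, hsum⟩ | ⟨u, hu, hub⟩
    · refine Or.inl ⟨Fin.snoc lam 0, ?_, ?_⟩
      · intro i
        refine Fin.lastCases ?_ ?_ i
        · simp
        · intro j; simpa using hnn j
      · rw [Fin.sum_univ_castSucc]
        simp [hsum]
        exact hsum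
    · by_cases hut : 0 ≤ u ⬝ᵥ t
      · refine Or.inr ⟨u, ?_, hub⟩
        intro i
        refine Fin.lastCases ?_ ?_ i
        · simpa using hut
        · intro j; simpa using hu j
      · push_neg at hut
        have hut' : u ⬝ᵥ t ≠ 0 := ne_of_lt hut
        rcases IH (fun i => a0 i - ((u ⬝ᵥ a0 i) / (u ⬝ᵥ t)) • t)
            (b - ((u ⬝ᵥ b) / (u ⬝ᵥ t)) • t) with ⟨lam, hnn, hsum⟩ | ⟨w, hw, hwb⟩
        · -- b is a conic combination
          set mu : ℚ := ((u ⬝ᵥ b) - ∑ i, lam i * (u ⬝ᵥ a0 i)) / (u ⬝ᵥ t) with hmu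
          have hmupos : 0 < mu := by
            apply div_pos_of_neg_of_neg _ hut
            have : 0 ≤ ∑ i, lam i * (u ⬝ᵥ a0 i) :=
              Finset.sum_nonneg fun i _ => mul_nonneg (hnn i) (hu i)
            linarith
          have hb : b = ∑ i, lam i • a0 i + mu • t := by
            have expand : ∑ i, lam i • (a0 i - ((u ⬝ᵥ a0 i) / (u ⬝ᵥ t)) • t)
                = ∑ i, lam i • a0 i - ((∑ i, lam i * (u ⬝ᵥ a0 i)) / (u ⬝ᵥ t)) • t := by
              rw [div_eq_mul_inv, Finset.sum_mul, Finset.sum_smul, ← Finset.sum_sub_distrib]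
              congr 1; ext i
              rw [smul_sub, smul_smul]
              ring_nf
            rw [expand] at hsum
            have : b = ∑ i, lam i • a0 i - ((∑ i, lam i * (u ⬝ᵥ a0 i)) / (u ⬝ᵥ t)) • t
                + ((u ⬝ᵥ b) / (u ⬝ᵥ t)) • t := by
              rw [hsum]; abel
            rw [this, hmu, sub_div, sub_smul]
            abel
          refine Or.inl ⟨Fin.snoc lam mu, ?_, ?_⟩
          · intro i
            refine Fin.lastCases ?_ ?_ i
            · simpa using le_of_lt hmupos
            · intro j; simpa using hnn j
          · rw [Fin.sum_univ_castSucc]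
            simpa using hb.symm
        · -- tilt w to be nonnegative on t as well
          set w' : ι → ℚ := w - ((w ⬝ᵥ t) / (u ⬝ᵥ t)) • u with hw'
          have hdot : ∀ x : ι → ℚ, w' ⬝ᵥ x = w ⬝ᵥ (x - ((u ⬝ᵥ x) / (u ⬝ᵥ t)) • t) := by
            intro x
            rw [hw', sub_dotProduct, smul_dotProduct, dotProduct_sub, dotProduct_smul]
            have h1 : w ⬝ᵥ ((u ⬝ᵥ x / u ⬝ᵥ t) • t) = (u ⬝ᵥ x / u ⬝ᵥ t) * (w ⬝ᵥ t) :=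
              dotProduct_smul _ _ _
            field_simp
            ring
          refine Or.inr ⟨w', ?_, ?_⟩
          · intro i
            refine Fin.lastCases ?_ ?_ i
            · show 0 ≤ w' ⬝ᵥ t
              rw [hdot, div_self hut', one_smul, sub_self, dotProduct_zero]
            · intro j
              rw [hdot]
              exact hw j
          · rw [hdot]
            exact hwb

/-- Gordan's theorem over ℚ. -/
theorem gordanQ {n : ℕ} {κ : Type*} [Fintype κ] (a : κ → (Fin n → ℚ))
    (h : ∀ lam : κ → ℚ, (∀ i, 0 ≤ lam i) → ∑ i, lam i • a i = 0 → lam = 0) :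
    ∃ u : Fin n → ℚ, ∀ i, 0 < u ⬝ᵥ a i := by
  classical
  set e := Fintype.equivFin κ with he
  set A : Fin (Fintype.card κ) → ((Fin n ⊕ Unit) → ℚ) :=
    fun j => Sum.elim (a (e.symm j)) (fun _ => 1) with hA
  set b : (Fin n ⊕ Unit) → ℚ := Sum.elim 0 (fun _ => 1) with hb
  rcases farkasQ (Fintype.card κ) A b with ⟨lam, hnn, hsum⟩ | ⟨U, hU, hUb⟩
  · exfalso
    have hone : ∑ j, lam j = 1 := by
      have := congrFun hsum (Sum.inr ())
      simpa [hA, hb, Finset.sum_apply] using this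
    have hzero : ∀ i : Fin n, ∑ j, lam j * a (e.symm j) i = 0 := by
      intro i
      have := congrFun hsum (Sum.inl i)
      simpa [hA, hb, Finset.sum_apply] using this
    have hcomb : ∑ i : κ, (lam (e i)) • a i = 0 := by
      have : ∑ i : κ, (lam (e i)) • a i = ∑ j, lam j • a (e.symm j) := by
        rw [← Equiv.sum_comp e (fun j => lam j • a (e.symm j))]
        simp
      rw [this]
      funext i
      simpa [Finset.sum_apply] using hzero i
    have := h (fun i => lam (e i)) (fun i => hnn _) hcomb
    have hz : ∀ j, lam j = 0 := by
      intro j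
      have := congrFun this (e.symm j)
      simpa using this
    simp [hz] at hone
  · refine ⟨fun i => U (Sum.inl i), fun i => ?_⟩
    have hc : U (Sum.inr ()) < 0 := by
      simpa [hb, dotProduct, Fintype.sum_sum_type] using hUb
    have := hU (e i)
    have hexp : U ⬝ᵥ A (e i) = (fun i => U (Sum.inl i)) ⬝ᵥ a i + U (Sum.inr ()) := by
      simp [hA, hb, dotProduct, Fintype.sum_sum_type]
    rw [hexp] at this
    linarith


/-- coordinatewise cast from `ℤⁿ` to `ℚⁿ` -/
def iQ {n : ℕ} (x : Fin n → ℤ) : Fin n → ℚ := fun i => (x i : ℚ)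

lemma iQ_add {n : ℕ} (x y : Fin n → ℤ) : iQ (x + y) = iQ x + iQ y := by
  funext i; simp [iQ]

lemma iQ_neg {n : ℕ} (x : Fin n → ℤ) : iQ (-x) = -iQ x := by
  funext i; simp [iQ]

lemma iQ_zero {n : ℕ} : iQ (0 : Fin n → ℤ) = 0 := by funext i; simp [iQ]

lemma iQ_zsmul {n : ℕ} (m : ℤ) (x : Fin n → ℤ) : iQ (m • x) = (m : ℚ) • iQ x := by
  funext i; simp [iQ]

lemma iQ_eq_zero {n : ℕ} {x : Fin n → ℤ} (h : iQ x = 0) : x = 0 := by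
  funext i
  have := congrFun h i
  simpa [iQ] using this

lemma iQ_sum {n : ℕ} {κ : Type*} [Fintype κ] (f : κ → (Fin n → ℤ)) :
    iQ (∑ i, f i) = ∑ i, iQ (f i) := by
  funext j
  simp [iQ, Finset.sum_apply]

/-- clearing denominators: if `q.den ∣ N` then `q * N` is an integer. -/
lemma num_mul_den_dvd (q : ℚ) (N : ℤ) (h : (q.den : ℤ) ∣ N) :
    ((q * N).num : ℚ) = q * N := by
  obtain ⟨c, hc⟩ := h
  have hq : q * (q.den : ℚ) = (q.num : ℚ) := Rat.mul_den_eq_num q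
  have : q * (N : ℚ) = ((q.num * c : ℤ) : ℚ) := by
    rw [hc]
    push_cast
    rw [← mul_assoc, hq]
  rw [this, Rat.num_intCast]

/-- positive integer multiples stay in a positive cone -/
lemma zsmul_mem_cone {A : Type*} [AddCommGroup A] {P : Set A} (hP : IsPositiveCone P)
    {x : A} (hx : x ∈ P) : ∀ m : ℤ, 1 ≤ m → m • x ∈ P := by
  refine Int.le_induction ?_ ?_
  · simpa using hx
  · intro m _ ih
    rw [add_smul, one_smul]
    exact hP.2.1 _ ih _ hx

/-- a nontrivial nonnegative integer combination of cone elements is in the cone -/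
lemma sum_zsmul_mem_cone {A : Type*} [AddCommGroup A] {P : Set A} (hP : IsPositiveCone P)
    {κ : Type*} [Fintype κ] (f : κ → A) (c : κ → ℤ)
    (hc : ∀ i, 0 ≤ c i) (hf : ∀ i, f i ∈ P) (hex : ∃ i, c i ≠ 0) :
    (∑ i, c i • f i) ∈ P := by
  classical
  have hfilter : ∑ i ∈ Finset.univ.filter (fun i => c i ≠ 0), c i • f i
      = ∑ i : κ, c i • f i := by
    apply Finset.sum_filter_of_ne
    intro i _ hne hci
    exact hne (by rw [hci, zero_smul])
  rw [← hfilter]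
  have hne : (Finset.univ.filter (fun i => c i ≠ 0)).Nonempty := by
    obtain ⟨i, hi⟩ := hex
    exact ⟨i, by simp [hi]⟩
  refine Finset.sum_induction_nonempty _ (· ∈ P) (fun a b ha hb => hP.2.1 a ha b hb) hne ?_
  intro i hi
  rw [Finset.mem_filter] at hi
  have h1 : 1 ≤ c i := lt_of_le_of_ne (hc i) (Ne.symm hi.2)
  exact zsmul_mem_cone hP (hf i) _ h1

/-- The refinement of a positive cone by a rational linear functional, tie-broken
by the original cone, is again a positive cone; if the functional is nonnegative
on `S` but negative somewhere on `P`, it gives a different cone containing `S`. -/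
lemma refine_cone {n : ℕ} (P : Set (Fin n → ℤ)) (hP : IsPositiveCone P)
    (S : Finset (Fin n → ℤ)) (hS : ↑S ⊆ P) (u : Fin n → ℚ)
    (hSnn : ∀ s ∈ S, 0 ≤ u ⬝ᵥ iQ s)
    {x₀ : Fin n → ℤ} (hx₀ : x₀ ∈ P) (hneg : u ⬝ᵥ iQ x₀ < 0) :
    ∃ P' : Set (Fin n → ℤ), IsPositiveCone P' ∧ P' ≠ P ∧ ↑S ⊆ P' := by
  classical
  set P' : Set (Fin n → ℤ) := {x | 0 < u ⬝ᵥ iQ x ∨ (u ⬝ᵥ iQ x = 0 ∧ x ∈ P)} with hP'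
  have hmem : ∀ x, x ∈ P' ↔ (0 < u ⬝ᵥ iQ x ∨ (u ⬝ᵥ iQ x = 0 ∧ x ∈ P)) := fun x => Iff.rfl
  refine ⟨P', ⟨?_, ?_, ?_⟩, ?_, ?_⟩
  · -- 0 ∉ P'
    rw [hmem]
    rw [iQ_zero, dotProduct_zero]
    rintro (h | ⟨-, h⟩)
    · exact lt_irrefl _ h
    · exact hP.1 h
  · -- closed under addition
    intro a ha b hb
    rw [hmem] at ha hb ⊢
    rw [iQ_add, dotProduct_add]
    rcases ha with ha | ⟨ha0, haP⟩
    · rcases hb with hb | ⟨hb0, hbP⟩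
      · exact Or.inl (by linarith)
      · exact Or.inl (by linarith)
    · rcases hb with hb | ⟨hb0, hbP⟩
      · exact Or.inl (by linarith)
      · exact Or.inr ⟨by rw [ha0, hb0, add_zero], hP.2.1 _ haP _ hbP⟩
  · -- xor
    intro a ha
    have hnegdot : u ⬝ᵥ iQ (-a) = -(u ⬝ᵥ iQ a) := by rw [iQ_neg, dotProduct_neg]
    rcases lt_trichotomy (u ⬝ᵥ iQ a) 0 with h | h | h
    · refine Or.inr ⟨?_, ?_⟩
      · rw [hmem, hnegdot]
        exact Or.inl (by linarith)
      · rw [hmem]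
        rintro (h' | ⟨h', -⟩) <;> linarith
    · have := hP.2.2 a ha
      rcases this with ⟨haP, hnaP⟩ | ⟨hnaP, haP⟩
      · refine Or.inl ⟨?_, ?_⟩
        · rw [hmem]; exact Or.inr ⟨h, haP⟩
        · rw [hmem, hnegdot, h]
          rintro (h' | ⟨-, h'⟩)
          · simp at h'
          · exact hnaP h'
      · refine Or.inr ⟨?_, ?_⟩
        · rw [hmem, hnegdot, h]; exact Or.inr ⟨by simp, hnaP⟩
        · rw [hmem, h]
          rintro (h' | ⟨-, h'⟩)
          · exact lt_irrefl _ h'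
          · exact haP h'
    · refine Or.inl ⟨?_, ?_⟩
      · rw [hmem]; exact Or.inl h
      · rw [hmem, hnegdot]
        rintro (h' | ⟨h', -⟩) <;> linarith
  · -- P' ≠ P
    intro hEq
    have : x₀ ∈ P' := hEq ▸ hx₀
    rw [hmem] at this
    rcases this with h | ⟨h, -⟩ <;> linarith
  · -- S ⊆ P'
    intro s hs
    have hsS : s ∈ S := by exact_mod_cast hs
    have hsP : s ∈ P := hS hs
    refine (hmem s).mpr ?_
    rcases lt_or_eq_of_le (hSnn s hsS) with h | h
    · exact Or.inl h
    · exact Or.inr ⟨h.symm, hsP⟩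

/-- Sikora: for `n ≥ 2`, no ordering of `ℤⁿ` is isolated: given
any positive cone `P` of `ℤⁿ` and any finite subset `S ⊆ P`, there is a
different positive cone `P'` still containing `S`. -/
theorem zn_orderings_not_isolated (n : ℕ) (hn : 2 ≤ n)
    (P : Set (Fin n → ℤ)) (hP : IsPositiveCone P)
    (S : Finset (Fin n → ℤ)) (hS : ↑S ⊆ P) :
    ∃ P' : Set (Fin n → ℤ), IsPositiveCone P' ∧ P' ≠ P ∧ ↑S ⊆ P' := by
  classical
  have hSP : ∀ s : {x // x ∈ S}, (s : Fin n → ℤ) ∈ P := fun s => hS s.2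
  -- Gordan's hypothesis: no nontrivial nonnegative rational combination of S vanishes
  have hgord : ∀ lam : {x // x ∈ S} → ℚ, (∀ i, 0 ≤ lam i) →
      ∑ i, lam i • iQ (i : {x // x ∈ S}).1 = 0 → lam = 0 := by
    intro lam hnn hsum
    by_contra hlam
    obtain ⟨i₀, hi₀⟩ : ∃ i, lam i ≠ 0 := Function.ne_iff.mp hlam
    set N : ℤ := ∏ i : {x // x ∈ S}, ((lam i).den : ℤ) with hN
    have hNpos : 0 < N :=
      Finset.prod_pos fun i _ => by exact_mod_cast (lam i).pos
    have hdvd : ∀ i, ((lam i).den : ℤ) ∣ N := fun i =>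
      Finset.dvd_prod_of_mem _ (Finset.mem_univ i)
    set m : {x // x ∈ S} → ℤ := fun i => (lam i * N).num with hm
    have hkey : ∀ i, ((m i : ℚ)) = lam i * N := fun i => num_mul_den_dvd _ _ (hdvd i)
    have hmnn : ∀ i, 0 ≤ m i := fun i =>
      Rat.num_nonneg.mpr (mul_nonneg (hnn i) (by exact_mod_cast hNpos.le))
    have hm₀ : m i₀ ≠ 0 :=
      Rat.num_ne_zero.mpr (mul_ne_zero hi₀ (by exact_mod_cast hNpos.ne'))
    have hsum0 : ∑ i, m i • (i : {x // x ∈ S}).1 = (0 : Fin n → ℤ) := by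
      apply iQ_eq_zero
      rw [iQ_sum]
      have : ∀ i : {x // x ∈ S}, iQ (m i • (i : {x // x ∈ S}).1)
          = (N : ℚ) • (lam i • iQ (i : {x // x ∈ S}).1) := by
        intro i
        rw [iQ_zsmul, hkey i, smul_smul, mul_comm]
      rw [Finset.sum_congr rfl fun i _ => this i, ← Finset.smul_sum, hsum, smul_zero]
    have : (0 : Fin n → ℤ) ∈ P := by
      rw [← hsum0]
      exact sum_zsmul_mem_cone hP _ m hmnn hSP ⟨i₀, hm₀⟩
    exact hP.1 this
  obtain ⟨u, hu⟩ := gordanQ (fun s : {x // x ∈ S} => iQ s.1) hgord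
  have huS : ∀ s ∈ S, 0 < u ⬝ᵥ iQ s := fun s hs => hu ⟨s, hs⟩
  by_cases hA : ∃ x ∈ P, u ⬝ᵥ iQ x < 0
  · obtain ⟨x₀, hx₀, hneg⟩ := hA
    exact refine_cone P hP S hS u (fun s hs => (huS s hs).le) hx₀ hneg
  · push_neg at hA
    -- find a nonzero rational kernel vector of u (here we use n ≥ 2)
    have h0n : (0 : ℕ) < n := by omega
    have h1n : (1 : ℕ) < n := by omega
    obtain ⟨w, hw0, hwdot⟩ : ∃ w : Fin n → ℚ, w ≠ 0 ∧ u ⬝ᵥ w = 0 := by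
      by_cases hu0 : u = 0
      · refine ⟨Pi.single ⟨0, h0n⟩ 1, ?_, by rw [hu0, zero_dotProduct]⟩
        intro h
        have := congrFun h ⟨0, h0n⟩
        simp [Pi.single_eq_same] at this
      · obtain ⟨i, hi⟩ := Function.ne_iff.mp hu0
        have hi : u i ≠ 0 := by simpa using hi
        set j : Fin n := if i = ⟨0, h0n⟩ then ⟨1, h1n⟩ else ⟨0, h0n⟩ with hj
        have hji : j ≠ i := by
          rw [hj]
          split_ifs with h
          · rw [h]
            simp [Fin.ext_iff]
          · exact fun hh => h hh.symm
        refine ⟨Pi.single j (u i) - Pi.single i (u j), ?_, ?_⟩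
        · intro h
          have := congrFun h j
          rw [Pi.sub_apply, Pi.single_eq_same, Pi.single_eq_of_ne hji, Pi.zero_apply] at this
          simp at this
          exact hi this
        · rw [dotProduct_sub, dotProduct_single, dotProduct_single]
          ring
    -- clear denominators to get a nonzero integer kernel vector
    set N : ℤ := ∏ k, ((w k).den : ℤ) with hN
    have hNpos : 0 < N := Finset.prod_pos fun k _ => by exact_mod_cast (w k).pos
    have hNQ : ((N : ℚ)) ≠ 0 := by exact_mod_cast hNpos.ne'
    set z : Fin n → ℤ := fun k => (w k * N).num with hz
    have hiQz : iQ z = (N : ℚ) • w := by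
      funext k
      have : ((z k : ℚ)) = w k * N :=
        num_mul_den_dvd _ _ (Finset.dvd_prod_of_mem _ (Finset.mem_univ k))
      rw [Pi.smul_apply, smul_eq_mul, mul_comm]
      exact this
    have hz0 : z ≠ 0 := by
      intro h
      apply hw0
      have h2 : (N : ℚ) • w = 0 := by rw [← hiQz, h, iQ_zero]
      rcases smul_eq_zero.mp h2 with h3 | h3
      · exact absurd h3 hNQ
      · exact h3
    have hdz : u ⬝ᵥ iQ z = 0 := by
      rw [hiQz, dotProduct_smul, hwdot, smul_zero]
    obtain ⟨z', hz'P, hz'dot, hz'ne⟩ :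
        ∃ z', z' ∈ P ∧ u ⬝ᵥ iQ z' = 0 ∧ iQ z' ≠ 0 := by
      rcases hP.2.2 z hz0 with ⟨h1, -⟩ | ⟨h1, -⟩
      · exact ⟨z, h1, hdz, fun h => hz0 (iQ_eq_zero h)⟩
      · refine ⟨-z, h1, ?_, ?_⟩
        · rw [iQ_neg, dotProduct_neg, hdz, neg_zero]
        · rw [iQ_neg, neg_ne_zero]
          exact fun h => hz0 (iQ_eq_zero h)
    -- tilt u against z'
    set M : ℚ := ∑ s ∈ S, max 0 ((iQ z' ⬝ᵥ iQ s) / (u ⬝ᵥ iQ s)) with hM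
    set u' : Fin n → ℚ := M • u - iQ z' with hu'
    have hSnn : ∀ s ∈ S, 0 ≤ u' ⬝ᵥ iQ s := by
      intro s hs
      have hpos := huS s hs
      have hle : (iQ z' ⬝ᵥ iQ s) / (u ⬝ᵥ iQ s) ≤ M :=
        le_trans (le_max_right 0 _)
          (Finset.single_le_sum (f := fun t => max (0:ℚ) ((iQ z' ⬝ᵥ iQ t) / (u ⬝ᵥ iQ t)))
            (fun t _ => le_max_left 0 _) hs)
      have hbd : iQ z' ⬝ᵥ iQ s ≤ M * (u ⬝ᵥ iQ s) := (div_le_iff₀ hpos).mp hle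
      rw [hu', sub_dotProduct, smul_dotProduct]
      simp only [smul_eq_mul]
      linarith
    have hneg : u' ⬝ᵥ iQ z' < 0 := by
      have hself : 0 < iQ z' ⬝ᵥ iQ z' := by
        have hnn : 0 ≤ iQ z' ⬝ᵥ iQ z' := Finset.sum_nonneg fun i _ => mul_self_nonneg _
        have hne : iQ z' ⬝ᵥ iQ z' ≠ 0 :=
          fun h => hz'ne (dotProduct_self_eq_zero.mp h)
        exact lt_of_le_of_ne hnn (Ne.symm hne)
      rw [hu', sub_dotProduct, smul_dotProduct]
      simp only [smul_eq_mul]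
      rw [hz'dot]
      linarith
    exact refine_cone P hP S hS u' hSnn hz'P hneg
end
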